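/- Let 1 < α < 2 < β be irrationals with 1/α + 1/β = 1, let aₙ = ⌊nα⌋ and bₙ = ⌊nβ⌋. Then for every n ≥ 1, aₙ = mex{aₖ, bₖ : 0 ≤ k < n} (the least nonnegative integer not among a₀,…,a_{n-1}, b₀,…,b_{n-1}). -/

import Mathlib

/-- The minimum excluded value of a set of integers: the least nonnegative
integer not belonging to the set. -/
noncomputable def mex (S : Set ℤ) : ℤ := (sInf {m : ℕ | (m : ℤ) ∉ S} : ℕ)

theorem stmt_18 (α β : ℝ) (hiα : Irrational α) (hiβ : Irrational β)
    (h1 : 1 < α) (h2 : α < 2) (h3 : 2 < β) (hab : 1 / α + 1 / β = 1) :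
    ∀ n : ℕ, 1 ≤ n →
      ⌊(n : ℝ) * α⌋ =
        mex {x : ℤ | ∃ k < n, x = ⌊(k : ℝ) * α⌋ ∨ x = ⌊(k : ℝ) * β⌋} := by
  intro n hn
  have hα0 : (0:ℝ) < α := by linarith
  have hβ0 : (0:ℝ) < β := by linarith
  have hrs : α.HolderConjugate β := Real.holderConjugate_iff.mpr ⟨h1, by rw [← one_div, ← one_div]; exact hab⟩
  have hsd := hiα.beattySeq_symmDiff_beattySeq_pos hrs
  set S : Set ℤ := {x : ℤ | ∃ k < n, x = ⌊(k : ℝ) * α⌋ ∨ x = ⌊(k : ℝ) * β⌋} with hSdef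
  -- positivity of Beatty terms
  have hposα : ∀ k : ℤ, 0 < k → 0 < ⌊(k:ℝ) * α⌋ := by
    intro k hk
    have hk1 : (1:ℝ) ≤ (k:ℝ) := by exact_mod_cast hk
    exact Int.floor_pos.mpr (one_le_mul_of_one_le_of_one_le hk1 h1.le)
  -- disjointness of the two positive Beatty sequences
  have hdisj : ∀ k m : ℤ, 0 < k → 0 < m → ⌊(k:ℝ)*α⌋ ≠ ⌊(m:ℝ)*β⌋ := by
    intro k m hk hm he
    have hA : ⌊(k:ℝ)*α⌋ ∈ {x | ∃ k > 0, beattySeq α k = x} := ⟨k, hk, rfl⟩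
    have hB : ⌊(k:ℝ)*α⌋ ∈ {x | ∃ k > 0, beattySeq β k = x} := ⟨m, hm, he.symm⟩
    have hpos := Set.ext_iff.mp hsd ⌊(k:ℝ)*α⌋
    rw [Set.mem_symmDiff] at hpos
    have : (0:ℤ) < ⌊(k:ℝ)*α⌋ := hposα k hk
    tauto
  -- completeness: every positive integer is hit
  have hcov : ∀ j : ℤ, 0 < j →
      (∃ k : ℤ, 0 < k ∧ j = ⌊(k:ℝ)*α⌋) ∨ (∃ k : ℤ, 0 < k ∧ j = ⌊(k:ℝ)*β⌋) := by
    intro j hj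
    have hiff := Set.ext_iff.mp hsd j
    rw [Set.mem_symmDiff] at hiff
    have hj' := hiff.mpr hj
    rcases hj' with ⟨⟨k, hk, he⟩, -⟩ | ⟨⟨k, hk, he⟩, -⟩
    · exact Or.inl ⟨k, hk, he.symm⟩
    · exact Or.inr ⟨k, hk, he.symm⟩
  -- strict monotonicity of floor multiples for slope > 1
  have hmono : ∀ (γ : ℝ), 1 < γ → ∀ j m : ℤ, j < m → ⌊(j:ℝ)*γ⌋ < ⌊(m:ℝ)*γ⌋ := by
    intro γ hγ j m hjm
    have hj1 : (j:ℝ) + 1 ≤ (m:ℝ) := by exact_mod_cast hjm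
    have h' : (j:ℝ)*γ + 1 ≤ (m:ℝ)*γ := by nlinarith
    have h'' := Int.floor_le_floor h'
    rw [Int.floor_add_one] at h''
    omega
  set N : ℤ := ⌊(n : ℝ) * α⌋ with hNdef
  have hncast : ((n:ℤ):ℝ) = (n:ℝ) := by push_cast; ring
  have hnpos : (0:ℤ) < (n:ℤ) := by exact_mod_cast hn
  have hNpos : 0 < N := by
    have := hposα (n:ℤ) hnpos
    rwa [hncast] at this
  -- N is not in S
  have hNS : N ∉ S := by
    rintro ⟨k, hkn, hk | hk⟩
    · have hklt : ((k:ℕ):ℤ) < (n:ℤ) := by exact_mod_cast hkn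
      have := hmono α h1 (k:ℤ) (n:ℤ) hklt
      push_cast at this
      omega
    · rcases Nat.eq_zero_or_pos k with rfl | hk0
      · simp at hk
        omega
      · have hk0' : (0:ℤ) < (k:ℤ) := by exact_mod_cast hk0
        refine hdisj (n:ℤ) (k:ℤ) hnpos hk0' ?_
        have hkc : ((k:ℤ):ℝ) = (k:ℝ) := by push_cast; ring
        rw [hncast, hkc, ← hk]
  -- everything below N is in S
  have hbelow : ∀ m : ℤ, 0 ≤ m → m < N → m ∈ S := by
    intro m hm0 hmN
    rcases hm0.eq_or_lt with rfl | hm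
    · exact ⟨0, hn, Or.inl (by simp)⟩
    rcases hcov m hm with ⟨k, hk, rfl⟩ | ⟨k, hk, rfl⟩
    · have hkn : k < (n:ℤ) := by
        by_contra h
        push_neg at h
        have : (n:ℝ)*α ≤ (k:ℝ)*α := by
          have : ((n:ℤ):ℝ) ≤ (k:ℝ) := by exact_mod_cast h
          rw [hncast] at this
          exact mul_le_mul_of_nonneg_right this hα0.le
        have := Int.floor_le_floor this
        omega
      refine ⟨k.toNat, ?_, Or.inl ?_⟩
      · omega
      · congr 2
        exact_mod_cast (Int.toNat_of_nonneg hk.le).symm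
    · have hkβ : (k:ℝ)*β < (n:ℝ)*β := by
        have h1' : (k:ℝ)*β < (⌊(k:ℝ)*β⌋:ℝ) + 1 := Int.lt_floor_add_one _
        have h2' : (⌊(k:ℝ)*β⌋:ℝ) + 1 ≤ (N:ℝ) := by exact_mod_cast hmN
        have h3' : (N:ℝ) ≤ (n:ℝ)*α := Int.floor_le _
        have h4' : (n:ℝ)*α < (n:ℝ)*β := by
          have hn1 : (1:ℝ) ≤ (n:ℝ) := by exact_mod_cast hn
          nlinarith
        linarith
      have hkn : k < (n:ℤ) := by
        have : (k:ℝ) < (n:ℝ) := (mul_lt_mul_iff_of_pos_right hβ0).mp hkβ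
        exact_mod_cast this
      refine ⟨k.toNat, ?_, Or.inr ?_⟩
      · omega
      · congr 2
        exact_mod_cast (Int.toNat_of_nonneg hk.le).symm
  -- conclude via computation of mex
  show N = mex S
  unfold mex
  set T : Set ℕ := {m : ℕ | (m:ℤ) ∉ S} with hTdef
  have hNT : N.toNat ∈ T := by
    simpa [hTdef, Int.toNat_of_nonneg hNpos.le] using hNS
  have hle : sInf T ≤ N.toNat := Nat.sInf_le hNT
  have hmem : sInf T ∈ T := Nat.sInf_mem ⟨_, hNT⟩
  have hge : N.toNat ≤ sInf T := by
    by_contra h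
    push_neg at h
    exact hmem (hbelow _ (Int.ofNat_nonneg _) (by omega))
  omega
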